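/- arXiv:1511.00488 — 2 statements merged into one kernel-verified Lean document; each statement's English description precedes it below -/
import Mathlib

section
/- Let m_m be a positive even integer, b > 0, z ∈ ℂ, w ∈ ℂ×, and set s(w) = (w−w⁻¹)/2, c(w) = (w+w⁻¹)/2. Define P(z,w) = ∏_{k=1}^{m_m−1} [ ((z/b)·s(w) − m_m/2 + k)² + (z/b)²·c(w)² ]. Then P(z, i·w) = −P(z, w). -/
open Complex Finset

theorem product_factor_anti_invariance (mm : ℕ) (hmm : 0 < mm) (hme : Even mm)
    (b : ℝ) (hb : 0 < b)
    (c s : ℂ → ℂ)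
    (hc : ∀ w : ℂ, c w = (w + w⁻¹) / 2)
    (hs : ∀ w : ℂ, s w = (w - w⁻¹) / 2)
    (P : ℂ → ℂ → ℂ)
    (hP : ∀ z w : ℂ, P z w =
      ∏ k ∈ Finset.Icc 1 (mm - 1),
        (((z / (b : ℂ)) * s w - (mm : ℂ) / 2 + (k : ℂ)) ^ 2
          + (z / (b : ℂ)) ^ 2 * (c w) ^ 2)) :
    ∀ (z : ℂ) (w : ℂ), w ≠ 0 → P z (I * w) = -P z w := by
  intro z w hw
  have hsc : s (I * w) = I * c w := by
    rw [hs, hc, mul_inv, Complex.inv_I]; ring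
  have hcs : c (I * w) = I * s w := by
    rw [hc, hs, mul_inv, Complex.inv_I]; ring
  set a := z / (b : ℂ) with ha
  set S := Finset.Icc 1 (mm - 1) with hS
  have hm2 : 2 ≤ mm := by
    rcases hme with ⟨n, rfl⟩; omega
  have h1 : P z (I * w) = ∏ k ∈ S,
      ((a * s w - (mm : ℂ) / 2 + k + I * (a * c w)) *
        (-(a * s w) - (mm : ℂ) / 2 + k + I * (a * c w))) := by
    rw [hP, hsc, hcs]
    refine Finset.prod_congr rfl fun k _ => ?_
    linear_combination a ^ 2 * (s w) ^ 2 * Complex.I_sq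
  have h2 : P z w = ∏ k ∈ S,
      ((a * s w - (mm : ℂ) / 2 + k + I * (a * c w)) *
        (a * s w - (mm : ℂ) / 2 + k - I * (a * c w))) := by
    rw [hP]
    refine Finset.prod_congr rfl fun k _ => ?_
    linear_combination a ^ 2 * (c w) ^ 2 * Complex.I_sq
  have h3 : (∏ k ∈ S, (-(a * s w) - (mm : ℂ) / 2 + k + I * (a * c w)))
      = ∏ k ∈ S, (-(a * s w - (mm : ℂ) / 2 + k - I * (a * c w))) := by
    refine Finset.prod_nbij' (fun k => mm - k) (fun k => mm - k) ?_ ?_ ?_ ?_ ?_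
    · intro k hk; simp only [hS, Finset.mem_Icc] at *; omega
    · intro k hk; simp only [hS, Finset.mem_Icc] at *; omega
    · intro k hk; simp only [hS, Finset.mem_Icc] at *; omega
    · intro k hk; simp only [hS, Finset.mem_Icc] at *; omega
    · intro k hk
      simp only [hS, Finset.mem_Icc] at hk
      have hkm : k ≤ mm := by omega
      push_cast [Nat.cast_sub hkm]
      ring
  have hcard : S.card = mm - 1 := by simp [hS]
  have hodd : Odd (mm - 1) := by
    rcases hme with ⟨n, rfl⟩; exact ⟨n - 1, by omega⟩
  have h4 : (∏ k ∈ S, (-(a * s w - (mm : ℂ) / 2 + k - I * (a * c w))))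
      = -(∏ k ∈ S, (a * s w - (mm : ℂ) / 2 + k - I * (a * c w))) := by
    rw [← neg_one_mul (∏ k ∈ S, (a * s w - (mm : ℂ) / 2 + k - I * (a * c w))),
      ← hodd.neg_one_pow (α := ℂ), ← hcard, ← Finset.prod_const, ← Finset.prod_mul_distrib]
    exact Finset.prod_congr rfl fun k _ => by ring
  rw [h1, h2, Finset.prod_mul_distrib, Finset.prod_mul_distrib, h3, h4, mul_neg]
end

section
/- Let m_m be a positive even integer, b>0, ρ̃₁>0, and L_j = b(ρ̃₁+j). For ℓ,m ∈ ℤ_{≥0} with m ∉ [ℓ−(m_m/2−1), ℓ+(m_m/2−1)], the quantity ϑ₀(L_ℓ/b, L_m/b) = ((L_m² − L_ℓ²)/b²)·∏_{k=1}^{m_m−1}((L_m/b − (m_m/2 − k))² − (L_ℓ/b)²) is strictly positive. -/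
open Finset

lemma prod_neg_of_odd_card (s : Finset ℕ) (f : ℕ → ℝ)
    (h : ∀ i ∈ s, f i < 0) (ho : Odd s.card) : ∏ i ∈ s, f i < 0 := by
  have h1 : ∏ i ∈ s, f i = (-1) ^ s.card * ∏ i ∈ s, (-f i) := by
    rw [← Finset.prod_const, ← Finset.prod_mul_distrib]
    simp
  rw [h1, ho.neg_one_pow]
  have hp : 0 < ∏ i ∈ s, (-f i) :=
    Finset.prod_pos fun i hi => by linarith [h i hi]
  linarith

set_option maxHeartbeats 1000000 in
theorem theta0_positive_at_poles (mm : ℕ) (hmm : 0 < mm) (hme : Even mm)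
    (b ρ₁ : ℝ) (hb : 0 < b) (hρ₁ : 0 < ρ₁)
    (L : ℕ → ℝ) (hL : ∀ j : ℕ, L j = b * (ρ₁ + j))
    (ℓ m : ℕ)
    (hm : (m : ℤ) ∉ Finset.Icc ((ℓ : ℤ) - (((mm / 2 : ℕ) : ℤ) - 1))
      ((ℓ : ℤ) + (((mm / 2 : ℕ) : ℤ) - 1))) :
    0 < ((L m) ^ 2 - (L ℓ) ^ 2) / b ^ 2 *
      ∏ k ∈ Finset.Icc 1 (mm - 1),
        ((L m / b - ((mm : ℝ) / 2 - (k : ℝ))) ^ 2 - (L ℓ / b) ^ 2) := by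
  obtain ⟨h, hh⟩ := hme
  have hhpos : 0 < h := by omega
  simp only [Finset.mem_Icc, not_and_or, not_le] at hm
  have hLm : L m / b = ρ₁ + m := by rw [hL]; field_simp
  have hLl : L ℓ / b = ρ₁ + ℓ := by rw [hL]; field_simp
  have hA : ((L m) ^ 2 - (L ℓ) ^ 2) / b ^ 2 = (ρ₁ + m) ^ 2 - (ρ₁ + ℓ) ^ 2 := by
    rw [hL, hL]; field_simp
  have hmm2 : (mm : ℝ) / 2 = (h : ℝ) := by
    have : (mm : ℝ) = 2 * h := by rw [hh]; push_cast; ring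
    rw [this]; ring
  rw [hLm, hLl, hA]
  rcases hm with hm | hm
  · -- m + h ≤ ℓ : everything negative, odd number of negative factors
    have hle : m + h ≤ ℓ := by omega
    have hml : (m : ℝ) + h ≤ ℓ := by exact_mod_cast hle
    have hAneg : (ρ₁ + m) ^ 2 - (ρ₁ + ℓ) ^ 2 < 0 := by
      have h0m : (0 : ℝ) ≤ m := Nat.cast_nonneg m
      have h1r : (1 : ℝ) ≤ h := by exact_mod_cast hhpos
      nlinarith [mul_pos (show (0:ℝ) < (ρ₁ + ℓ) - (ρ₁ + m) by linarith)
        (show (0:ℝ) < (ρ₁ + ℓ) + (ρ₁ + m) by linarith)]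
    have hPneg : ∏ k ∈ Finset.Icc 1 (mm - 1),
        (((ρ₁ + m) - ((mm : ℝ) / 2 - k)) ^ 2 - (ρ₁ + ℓ) ^ 2) < 0 := by
      apply prod_neg_of_odd_card
      · intro k hk
        rw [Finset.mem_Icc] at hk
        rw [hmm2]
        have hk1 : (1 : ℝ) ≤ k := by exact_mod_cast hk.1
        have hk2 : (k : ℝ) ≤ 2 * h - 1 := by
          have : (k : ℝ) ≤ ((mm - 1 : ℕ) : ℝ) := by exact_mod_cast hk.2
          have hmm1 : ((mm - 1 : ℕ) : ℝ) = 2 * h - 1 := by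
            have : mm - 1 = 2 * h - 1 := by omega
            rw [this]; push_cast [Nat.cast_sub (by omega : 1 ≤ 2 * h)]; ring
          linarith [hmm1 ▸ this]
        have h1 : 0 < (ρ₁ + ℓ) - ((ρ₁ + m) - ((h : ℝ) - k)) := by linarith
        have h2 : 0 < (ρ₁ + ℓ) + ((ρ₁ + m) - ((h : ℝ) - k)) := by
          have hm0 : (0 : ℝ) ≤ m := Nat.cast_nonneg m
          have hl0 : (h : ℝ) ≤ ℓ := by linarith
          linarith
        nlinarith [mul_pos h1 h2]
      · rw [Nat.card_Icc]
        exact ⟨h - 1, by omega⟩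
    nlinarith [mul_pos (neg_pos.mpr hAneg) (neg_pos.mpr hPneg)]
  · -- ℓ + h ≤ m : everything positive
    have hle : ℓ + h ≤ m := by omega
    have hml : (ℓ : ℝ) + h ≤ m := by exact_mod_cast hle
    have hApos : 0 < (ρ₁ + m) ^ 2 - (ρ₁ + ℓ) ^ 2 := by
      have h0l : (0 : ℝ) ≤ ℓ := Nat.cast_nonneg ℓ
      have h1r : (1 : ℝ) ≤ h := by exact_mod_cast hhpos
      nlinarith [mul_pos (show (0:ℝ) < (ρ₁ + m) - (ρ₁ + ℓ) by linarith)
        (show (0:ℝ) < (ρ₁ + m) + (ρ₁ + ℓ) by linarith)]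
    have hPpos : 0 < ∏ k ∈ Finset.Icc 1 (mm - 1),
        (((ρ₁ + m) - ((mm : ℝ) / 2 - k)) ^ 2 - (ρ₁ + ℓ) ^ 2) := by
      apply Finset.prod_pos
      intro k hk
      rw [Finset.mem_Icc] at hk
      rw [hmm2]
      have hk1 : (1 : ℝ) ≤ k := by exact_mod_cast hk.1
      have h1 : 0 < ((ρ₁ + m) - ((h : ℝ) - k)) - (ρ₁ + ℓ) := by linarith
      have h2 : 0 < ((ρ₁ + m) - ((h : ℝ) - k)) + (ρ₁ + ℓ) := by
        have hl0 : (0 : ℝ) ≤ ℓ := Nat.cast_nonneg ℓ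
        linarith
      have key : 0 < (((ρ₁ + (m:ℝ)) - ((h : ℝ) - k)) - (ρ₁ + ℓ)) *
          (((ρ₁ + (m:ℝ)) - ((h : ℝ) - k)) + (ρ₁ + ℓ)) := mul_pos h1 h2
      nlinarith [key]
    exact mul_pos hApos hPpos
end
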